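/- Let X, Y, G, H be finite sets with |X| = N, |Y| = K, |G| = L, |H| = W, where N ≥ 2, and let (g_y, h_y)_{y∈Y} be a scrambling permutation pair with parameters (N, K, W, L). Let α : X → ℂ satisfy Σ_{x∈X} |α_x|² = 1, and let ε be a real number with |Σ_{x∈X} α_x|² = N·(1 − ε). Then (1/(K·L)) · Σ_{y∈Y} Σ_{u∈H} |Σ_{x : h_y(x) = u} α_x|² = 1 − ε·N·(L−1)/(L·(N−1)). -/

import Mathlib

open Finset

lemma normsq_re (z : ℂ) : ‖z‖^2 = (z * (starRingEnd ℂ) z).re := by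
  rw [Complex.mul_conj, Complex.ofReal_re, Complex.normSq_eq_norm_sq]

lemma sq_norm_sum {X : Type*} (s : Finset X) (α : X → ℂ) :
    ‖∑ x ∈ s, α x‖^2 = ∑ x₁ ∈ s, ∑ x₂ ∈ s, (α x₁ * (starRingEnd ℂ) (α x₂)).re := by
  rw [normsq_re, map_sum, Finset.sum_mul_sum, Complex.re_sum]
  exact Finset.sum_congr rfl fun x _ => Complex.re_sum _ _

lemma fiber_card_aux {X G H : Type*} [Fintype X] [Fintype G] [Fintype H] [DecidableEq H]
    (g : X → G) (h : X → H) (hbij : Function.Bijective (fun x : X => (g x, h x)))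
    (u : H) : (Finset.univ.filter (fun x : X => h x = u)).card = Fintype.card G := by
  rw [← Fintype.card_subtype]
  have e2 : {x : X // h x = u} ≃ {p : G × H // p.2 = u} :=
    (Equiv.ofBijective _ hbij).subtypeEquiv (fun x => Iff.rfl)
  have e3 : {p : G × H // p.2 = u} ≃ G :=
    { toFun := fun p => p.1.1
      invFun := fun a => ⟨(a, u), rfl⟩
      left_inv := fun p => by
        obtain ⟨⟨a, b⟩, hb⟩ := p; simp only at hb; subst hb; rfl
      right_inv := fun a => rfl }
  rw [Fintype.card_congr (e2.trans e3)]




/-- For a scrambling permutation pair (g_y, h_y) with parameters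
(N, K, W, L) (N ≥ 2, Y nonempty so the collision probability is well defined) and
a coefficient vector α with Σ_x |α_x|² = 1 and |Σ_x α_x|² = N(1 − ε), the success
probability of the Simple Scrambling protocol is
(1/(KL))·Σ_y Σ_u |Σ_{x : h_y(x)=u} α_x|² = 1 − ε·N(L−1)/(L(N−1)). -/
theorem simple_scrambling_success_probability
    {X Y G H : Type*} [Fintype X] [Fintype Y] [Nonempty Y] [Fintype G] [Fintype H]
    [DecidableEq H]
    {N K L W : ℕ}
    (hX : Fintype.card X = N) (hY : Fintype.card Y = K)
    (hG : Fintype.card G = L) (hH : Fintype.card H = W)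
    (hN : 2 ≤ N)
    (g : Y → X → G) (h : Y → X → H)
    (hbij : ∀ y : Y, Function.Bijective (fun x : X => (g y x, h y x)))
    (hcol : ∃ p : ℝ, ∀ x₁ x₂ : X, x₁ ≠ x₂ →
      ((Finset.univ.filter (fun y : Y => h y x₁ = h y x₂)).card : ℝ) = p * K)
    (α : X → ℂ) (hα : ∑ x : X, ‖α x‖ ^ 2 = 1)
    (ε : ℝ) (hfid : ‖∑ x : X, α x‖ ^ 2 = N * (1 - ε)) :
    (1 / ((K : ℝ) * L)) *
        ∑ y : Y, ∑ u : H,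
          ‖∑ x ∈ Finset.univ.filter (fun x : X => h y x = u), α x‖ ^ 2
      = 1 - ε * N * ((L : ℝ) - 1) / (L * ((N : ℝ) - 1)) := by
  classical
  obtain ⟨p, hp⟩ := hcol
  set r : X → X → ℝ := fun x₁ x₂ => (α x₁ * (starRingEnd ℂ) (α x₂)).re with hr
  -- basic numeric facts
  have hXne : Nonempty X := by
    rw [← Fintype.card_pos_iff, hX]; omega
  have hK0 : (K : ℝ) ≠ 0 := by
    have : 0 < Fintype.card Y := Fintype.card_pos
    rw [hY] at this; positivity
  have hL0 : (L : ℝ) ≠ 0 := by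
    have hcard : Fintype.card X = Fintype.card (G × H) := Fintype.card_of_bijective (hbij Classical.ofNonempty)
    rw [hX, Fintype.card_prod, hG, hH] at hcard
    have : L ≠ 0 := by rintro rfl; omega
    exact_mod_cast this
  have hN1 : (N : ℝ) - 1 ≠ 0 := by
    have : (2:ℝ) ≤ N := by exact_mod_cast hN
    linarith
  -- fiber cards
  have hfib : ∀ (y : Y) (u : H), ((Finset.univ.filter (fun x : X => h y x = u)).card : ℕ) = L := by
    intro y u; rw [fiber_card_aux (g y) (h y) (hbij y) u, hG]
  -- diagonal r
  have hdiag : ∀ x : X, r x x = ‖α x‖ ^ 2 := fun x => (normsq_re (α x)).symm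
  -- Step A: per-y rewrite
  have stepA : ∀ y : Y, ∑ u : H, ‖∑ x ∈ Finset.univ.filter (fun x : X => h y x = u), α x‖ ^ 2
      = ∑ x₁ : X, ∑ x₂ ∈ Finset.univ.filter (fun x₂ : X => h y x₂ = h y x₁), r x₁ x₂ := by
    intro y
    have : ∀ u : H, ‖∑ x ∈ Finset.univ.filter (fun x : X => h y x = u), α x‖ ^ 2
        = ∑ x₁ ∈ Finset.univ.filter (fun x : X => h y x = u),
            ∑ x₂ ∈ Finset.univ.filter (fun x₂ : X => h y x₂ = h y x₁), r x₁ x₂ := by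
      intro u
      rw [sq_norm_sum]
      refine Finset.sum_congr rfl fun x₁ hx₁ => ?_
      rw [Finset.mem_filter] at hx₁
      rw [hx₁.2]
    rw [Finset.sum_congr rfl fun u _ => this u]
    exact Finset.sum_fiberwise _ _ _
  -- full double sum of r
  have htot : ∑ x₁ : X, ∑ x₂ : X, r x₁ x₂ = (N : ℝ) * (1 - ε) := by
    rw [← hfid, sq_norm_sum]
  -- Step B/C: compute the big sum
  have stepB : ∑ y : Y, ∑ x₁ : X, ∑ x₂ ∈ Finset.univ.filter (fun x₂ : X => h y x₂ = h y x₁), r x₁ x₂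
      = (K : ℝ) * 1 + p * K * ((N : ℝ) * (1 - ε) - 1) := by
    have swap1 : ∑ y : Y, ∑ x₁ : X, ∑ x₂ ∈ Finset.univ.filter (fun x₂ : X => h y x₂ = h y x₁), r x₁ x₂
        = ∑ x₁ : X, ∑ x₂ : X,
            ((Finset.univ.filter (fun y : Y => h y x₁ = h y x₂)).card : ℝ) * r x₁ x₂ := by
      simp_rw [Finset.sum_filter]
      rw [Finset.sum_comm]
      refine Finset.sum_congr rfl fun x₁ _ => ?_
      rw [Finset.sum_comm]
      refine Finset.sum_congr rfl fun x₂ _ => ?_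
      rw [← Finset.sum_filter, Finset.sum_const, nsmul_eq_mul]
      have hfeq : (Finset.univ.filter (fun a : Y => h a x₂ = h a x₁))
          = (Finset.univ.filter (fun a : Y => h a x₁ = h a x₂)) := by
        ext a; simp [eq_comm]
      rw [hfeq]
    rw [swap1]
    have split : ∀ x₁ : X, ∑ x₂ : X,
        ((Finset.univ.filter (fun y : Y => h y x₁ = h y x₂)).card : ℝ) * r x₁ x₂
        = (K : ℝ) * ‖α x₁‖ ^ 2 + p * K * (∑ x₂ : X, r x₁ x₂ - r x₁ x₁) := by
      intro x₁
      rw [← Finset.add_sum_erase _ _ (Finset.mem_univ x₁)]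
      congr 1
      · have : (Finset.univ.filter (fun y : Y => h y x₁ = h y x₁)) = Finset.univ := by
          simp
        rw [this, Finset.card_univ, hY, hdiag]
      · rw [← Finset.sum_erase_eq_sub (Finset.mem_univ x₁), Finset.mul_sum]
        refine Finset.sum_congr rfl fun x₂ hx₂ => ?_
        rw [hp x₁ x₂ (Finset.ne_of_mem_erase hx₂).symm]
    rw [Finset.sum_congr rfl fun x₁ _ => split x₁, Finset.sum_add_distrib,
      ← Finset.mul_sum, hα, ← Finset.mul_sum, Finset.sum_sub_distrib, htot]
    congr 2
    rw [Finset.sum_congr rfl fun x _ => hdiag x, hα]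
  -- Step D: value of p
  have hpval : p * ((N : ℝ) - 1) = (L : ℝ) - 1 := by
    have count1 : ∑ x₁ : X, ∑ x₂ ∈ Finset.univ.erase x₁,
        ((Finset.univ.filter (fun y : Y => h y x₁ = h y x₂)).card : ℝ)
        = (N : ℝ) * (((N : ℝ) - 1) * (p * K)) := by
      rw [Finset.sum_congr rfl fun x₁ _ => Finset.sum_congr rfl
        (fun x₂ hx₂ => hp x₁ x₂ (Finset.ne_of_mem_erase hx₂).symm)]
      simp only [Finset.sum_const, nsmul_eq_mul, Finset.card_erase_of_mem (Finset.mem_univ _),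
        Finset.card_univ, hX]
      have hc : ((N - 1 : ℕ) : ℝ) = (N : ℝ) - 1 := by
        have h1 : 1 ≤ N := by omega
        push_cast [h1]; ring
      rw [hc]
    have count2 : ∑ x₁ : X, ∑ x₂ ∈ Finset.univ.erase x₁,
        ((Finset.univ.filter (fun y : Y => h y x₁ = h y x₂)).card : ℝ)
        = (K : ℝ) * ((N : ℝ) * ((L : ℝ) - 1)) := by
      have expand : ∀ x₁ x₂ : X, ((Finset.univ.filter (fun y : Y => h y x₁ = h y x₂)).card : ℝ)
          = ∑ y : Y, if h y x₁ = h y x₂ then (1:ℝ) else 0 := by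
        intro x₁ x₂
        rw [← Finset.sum_filter, Finset.sum_const, nsmul_eq_mul, mul_one]
      simp_rw [expand]
      rw [show (∑ x₁ : X, ∑ x₂ ∈ Finset.univ.erase x₁, ∑ y : Y,
            if h y x₁ = h y x₂ then (1:ℝ) else 0)
          = ∑ y : Y, ∑ x₁ : X, ∑ x₂ ∈ Finset.univ.erase x₁,
            (if h y x₁ = h y x₂ then (1:ℝ) else 0) from by
        rw [← Finset.sum_comm]
        exact Finset.sum_congr rfl fun x₁ _ => Finset.sum_comm]
      have inner : ∀ y : Y, ∀ x₁ : X, ∑ x₂ ∈ Finset.univ.erase x₁,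
          (if h y x₁ = h y x₂ then (1:ℝ) else 0) = (L : ℝ) - 1 := by
        intro y x₁
        rw [Finset.sum_erase_eq_sub (Finset.mem_univ x₁), if_pos rfl]
        congr 1
        rw [← Finset.sum_filter, Finset.sum_const, nsmul_eq_mul, mul_one]
        have heq2 : (Finset.univ.filter (fun x₂ : X => h y x₁ = h y x₂))
            = (Finset.univ.filter (fun x₂ : X => h y x₂ = h y x₁)) := by
          ext x; simp [eq_comm]
        rw [heq2, hfib y (h y x₁)]
      calc ∑ y : Y, ∑ x₁ : X, ∑ x₂ ∈ Finset.univ.erase x₁,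
            (if h y x₁ = h y x₂ then (1:ℝ) else 0)
          = ∑ y : Y, ∑ _x₁ : X, ((L : ℝ) - 1) := by
            exact Finset.sum_congr rfl fun y _ => Finset.sum_congr rfl fun x₁ _ => inner y x₁
        _ = (K : ℝ) * ((N : ℝ) * ((L : ℝ) - 1)) := by
            simp [Finset.card_univ, hX, hY, mul_assoc]
            ring
      -- need the order of sums: we did sum_comm giving ∑ x₁ ∑ y? check
    have hN0 : (N : ℝ) ≠ 0 := by
      have : (2:ℝ) ≤ N := by exact_mod_cast hN
      linarith
    have heq := count1.symm.trans count2
    have h2 : ((N:ℝ) * K) * (p * ((N:ℝ) - 1)) = ((N:ℝ) * K) * ((L:ℝ) - 1) := by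
      linear_combination heq
    exact mul_left_cancel₀ (mul_ne_zero hN0 hK0) h2
  -- Finish
  rw [Finset.sum_congr rfl fun y _ => stepA y, stepB]
  have hpeq : p = ((L : ℝ) - 1) / ((N : ℝ) - 1) := by
    rw [eq_div_iff hN1]; exact hpval
  rw [hpeq]
  field_simp
  ring
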